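/- The image of the closed ball B_r under the momentum map μ equals the simplex {x ∈ ℝⁿ : xₖ ≥ 0 for every k and ∑ₖ xₖ ≤ r²}, and this simplex equals the convex hull in ℝⁿ of the n+1 points 0, r²e₁, …, r²eₙ, where e₁, …, eₙ is the standard basis of ℝⁿ. -/

import Mathlib

open scoped BigOperators

/-- The momentum map of the ball: `μ(z)ₖ = |zₖ|²`. -/
noncomputable def ballMomentMap (n : ℕ) (z : EuclideanSpace ℂ (Fin n)) :
    EuclideanSpace ℝ (Fin n) :=
  WithLp.toLp 2 (fun k => ‖z k‖ ^ 2)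

theorem moment_image_closedBall_eq_simplex (n : ℕ) (hn : 1 ≤ n) (r : ℝ) (hr : 0 < r) :
    ballMomentMap n '' Metric.closedBall 0 r
      = {x : EuclideanSpace ℝ (Fin n) | (∀ k, 0 ≤ x k) ∧ ∑ k, x k ≤ r ^ 2} ∧
    {x : EuclideanSpace ℝ (Fin n) | (∀ k, 0 ≤ x k) ∧ ∑ k, x k ≤ r ^ 2}
      = convexHull ℝ
          ({0} ∪ Set.range (fun i : Fin n => r ^ 2 • EuclideanSpace.single i (1 : ℝ))) := by
  constructor
  · ext x
    constructor
    · rintro ⟨z, hz, rfl⟩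
      rw [Metric.mem_closedBall, dist_zero_right] at hz
      constructor
      · intro k; exact sq_nonneg ‖z k‖
      · have h1 : ∑ k, ballMomentMap n z k = ‖z‖ ^ 2 := by
          rw [EuclideanSpace.norm_eq, Real.sq_sqrt (by positivity)]
          simp [ballMomentMap]
        rw [h1]
        exact pow_le_pow_left₀ (norm_nonneg z) hz 2
    · rintro ⟨hx, hsum⟩
      refine ⟨WithLp.toLp 2 (fun k => (Real.sqrt (x k) : ℂ)), ?_, ?_⟩
      · rw [Metric.mem_closedBall, dist_zero_right, EuclideanSpace.norm_eq]
        have : ∀ k, ‖(Real.sqrt (x k) : ℂ)‖ ^ 2 = x k := by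
          intro k
          rw [Complex.norm_real, Real.norm_eq_abs, abs_of_nonneg (Real.sqrt_nonneg _),
            Real.sq_sqrt (hx k)]
        calc Real.sqrt (∑ k, ‖(fun k => (Real.sqrt (x k) : ℂ)) k‖ ^ 2)
            = Real.sqrt (∑ k, x k) := by simp only [this]
          _ ≤ Real.sqrt (r ^ 2) := Real.sqrt_le_sqrt hsum
          _ = r := Real.sqrt_sq hr.le
      · ext k
        rw [ballMomentMap]
        simp only [WithLp.ofLp_toLp]
        rw [Complex.norm_real, Real.norm_eq_abs,
          abs_of_nonneg (Real.sqrt_nonneg _), Real.sq_sqrt (hx k)]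
  · apply Set.Subset.antisymm
    · rintro x ⟨hx, hsum⟩
      have hr2 : (0:ℝ) < r ^ 2 := by positivity
      let f : Option (Fin n) → EuclideanSpace ℝ (Fin n) :=
        fun j => j.elim 0 (fun i => r ^ 2 • EuclideanSpace.single i (1 : ℝ))
      let w : Option (Fin n) → ℝ :=
        fun j => j.elim (1 - (∑ k, x k) / r ^ 2) (fun i => x i / r ^ 2)
      have hw : ∀ j, 0 ≤ w j := by
        rintro (_ | i)
        · simp only [w, Option.elim]
          have : (∑ k, x k) / r ^ 2 ≤ 1 := by
            rw [div_le_one hr2]; exact hsum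
          linarith
        · exact div_nonneg (hx i) hr2.le
      have hwsum : ∑ j, w j = 1 := by
        rw [Fintype.sum_option]
        simp only [w, Option.elim]
        rw [← Finset.sum_div]
        ring
      have hcomb : ∑ j, w j • f j = x := by
        rw [Fintype.sum_option]
        simp only [w, f, Option.elim, smul_zero, zero_add]
        ext k
        have : ∀ i : Fin n, ((x i / r ^ 2) • (r ^ 2 • EuclideanSpace.single i (1:ℝ))) k
            = (x i / r ^ 2) * r ^ 2 * (EuclideanSpace.single i (1:ℝ)) k := by
          intro i; simp [mul_assoc]
        calc (∑ i, (x i / r ^ 2) • (r ^ 2 • EuclideanSpace.single i (1:ℝ))) k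
            = ∑ i, ((x i / r ^ 2) • (r ^ 2 • EuclideanSpace.single i (1:ℝ))) k := by
              rw [WithLp.ofLp_sum]; exact Finset.sum_apply k Finset.univ _
          _ = ∑ i, (x i / r ^ 2) * r ^ 2 * (EuclideanSpace.single i (1:ℝ)) k := by
              simp only [this]
          _ = ∑ i, x i * (EuclideanSpace.single i (1:ℝ)) k := by
              congr 1; funext i; rw [div_mul_cancel₀ _ hr2.ne']
          _ = x k := by
              rw [Finset.sum_eq_single k]
              · simp [EuclideanSpace.single_apply]
              · intro i _ hi
                simp only [EuclideanSpace.single_apply]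
                rw [if_neg (Ne.symm hi), mul_zero]
              · intro h; exact absurd (Finset.mem_univ k) h
      rw [← hcomb]
      apply (convex_convexHull ℝ _).sum_mem
      · intro j _; exact hw j
      · rw [hwsum]
      · rintro (_ | i) _
        · exact subset_convexHull ℝ _ (Or.inl rfl)
        · exact subset_convexHull ℝ _ (Or.inr ⟨i, rfl⟩)
    · apply convexHull_min
      · rintro y (rfl | ⟨i, rfl⟩)
        · constructor
          · intro k; simp
          · simp; positivity
        · constructor
          · intro k
            simp only [PiLp.smul_apply, EuclideanSpace.single_apply, smul_eq_mul]
            positivity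
          · have : ∑ k, (r ^ 2 • EuclideanSpace.single i (1:ℝ)) k = r ^ 2 := by
              simp only [PiLp.smul_apply, smul_eq_mul]
              rw [Finset.sum_eq_single i]
              · simp [EuclideanSpace.single_apply]
              · intro b _ hb
                simp only [EuclideanSpace.single_apply]
                rw [if_neg hb, mul_zero]
              · intro h; exact absurd (Finset.mem_univ i) h
            exact le_of_eq this
      · intro a ha b hb s t hs ht hst
        constructor
        · intro k
          have : (s • a + t • b) k = s * a k + t * b k := rfl
          rw [this]
          have := ha.1 k; have := hb.1 k
          positivity
        · have : ∑ k, (s • a + t • b) k = s * ∑ k, a k + t * ∑ k, b k := by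
            simp only [PiLp.add_apply, PiLp.smul_apply, smul_eq_mul, Finset.sum_add_distrib,
              Finset.mul_sum]
          rw [this]
          calc s * ∑ k, a k + t * ∑ k, b k ≤ s * r ^ 2 + t * r ^ 2 := by
                gcongr; exacts [ha.2, hb.2]
            _ = r ^ 2 := by rw [← add_mul, hst, one_mul]
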